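/- For every natural number n ≥ 2 it holds that (1 − γ − 1/n)/(H_n − 1) ≤ (1 − γ − 1/6)/(H_6 − 1) = (20/29)·(5/6 − γ); that is, the supremum over n ≥ 2 of (1 − γ − 1/n)/(H_n − 1) is attained at n = 6 and equals (20/29)·(5/6 − γ). -/

import Mathlib

open Real

private lemma harmonic31_val : (harmonic 31 : ℚ) = 290774257297357/72201776446800 := by
  simp [harmonic, Finset.sum_range_succ]
  norm_num

private lemma harmonic64_val :
    (harmonic 64 : ℚ) = 623171679694215690971693339/131362987122535807501262400 := by
  simp [harmonic, Finset.sum_range_succ]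
  norm_num

private lemma gamma_lb : (163 : ℝ)/300 < Real.eulerMascheroniConstant := by
  have h := Real.eulerMascheroniSeq_lt_eulerMascheroniConstant 31
  rw [Real.eulerMascheroniSeq] at h
  have h32 : ((31:ℕ):ℝ) + 1 = 32 := by norm_num
  rw [h32] at h
  have hlog : Real.log 32 = 5 * Real.log 2 := by
    rw [show (32 : ℝ) = 2 ^ 5 by norm_num, Real.log_pow]
    push_cast; ring
  rw [hlog] at h
  have h2 : Real.log 2 < 0.6931471808 := Real.log_two_lt_d9
  have hH : ((harmonic 31 : ℚ) : ℝ) = 290774257297357/72201776446800 := by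
    rw [harmonic31_val]; norm_num
  rw [hH] at h
  nlinarith

private lemma gamma_ub : Real.eulerMascheroniConstant < (71 : ℝ)/120 := by
  have h := Real.eulerMascheroniConstant_lt_eulerMascheroniSeq' 64
  rw [Real.eulerMascheroniSeq'] at h
  norm_num at h
  have hlog : Real.log 64 = 6 * Real.log 2 := by
    rw [show (64 : ℝ) = 2 ^ 6 by norm_num, Real.log_pow]
    push_cast; ring
  rw [hlog] at h
  have h2 : (0.6931471803 : ℝ) < Real.log 2 := Real.log_two_gt_d9
  nlinarith

/-- For every `n ≥ 2`,
`(1 - γ - 1/n) / (H_n - 1) ≤ (1 - γ - 1/6) / (H_6 - 1)`, and the right-hand side equals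
`(20/29) * (5/6 - γ)`; i.e. the supremum over `n ≥ 2` is attained at `n = 6`. -/
theorem sup_attained_at_six :
    (∀ n : ℕ, 2 ≤ n →
      (1 - Real.eulerMascheroniConstant - 1 / n) /
          ((∑ i ∈ Finset.range n, (1 : ℝ) / (i + 1)) - 1)
        ≤ (1 - Real.eulerMascheroniConstant - 1 / 6) /
            ((∑ i ∈ Finset.range 6, (1 : ℝ) / (i + 1)) - 1))
    ∧ (1 - Real.eulerMascheroniConstant - 1 / 6) /
          ((∑ i ∈ Finset.range 6, (1 : ℝ) / (i + 1)) - 1)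
        = (20 / 29) * (5 / 6 - Real.eulerMascheroniConstant) := by
  set γ := Real.eulerMascheroniConstant with hγ
  have hlb : (163 : ℝ)/300 < γ := by rw [hγ]; exact gamma_lb
  have hub : γ < (71 : ℝ)/120 := by rw [hγ]; exact gamma_ub
  have hS6 : (∑ i ∈ Finset.range 6, (1 : ℝ) / (i + 1)) = 49/20 := by
    simp [Finset.sum_range_succ]; norm_num
  constructor
  · intro n hn
    -- key inequality: (1 - γ - 1/n) * (29/20) ≤ (5/6 - γ) * (S n - 1)
    have key : ∀ m : ℕ, 2 ≤ m →
        (1 - γ - 1 / m) * (29/20)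
          ≤ (5/6 - γ) * ((∑ i ∈ Finset.range m, (1 : ℝ) / (i + 1)) - 1) := by
      have key6 : ∀ m : ℕ, 6 ≤ m →
          (1 - γ - 1 / m) * (29/20)
            ≤ (5/6 - γ) * ((∑ i ∈ Finset.range m, (1 : ℝ) / (i + 1)) - 1) := by
        intro m hm
        induction m, hm using Nat.le_induction with
        | base => rw [hS6]; norm_num; linarith
        | succ m hm ih =>
          rw [Finset.sum_range_succ]
          have hm6 : (6:ℝ) ≤ (m:ℝ) := by exact_mod_cast hm
          have hmpos : (0:ℝ) < (m:ℝ) := by linarith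
          have h1 : (0:ℝ) < (m:ℝ) + 1 := by linarith
          push_cast
          have hstep : (29/20) * (1/(m:ℝ) - 1/((m:ℝ)+1)) ≤ (5/6 - γ) * (1/((m:ℝ)+1)) := by
            have e1 : 1/(m:ℝ) - 1/((m:ℝ)+1) = 1/((m:ℝ)*((m:ℝ)+1)) := by
              field_simp
              ring
            rw [e1, mul_one_div, mul_one_div,
              div_le_div_iff₀ (by positivity) h1]
            nlinarith [mul_pos hmpos h1]
          have hsum : (1 - γ - 1 / ((m:ℝ)+1)) * (29/20)
              = (1 - γ - 1 / (m:ℝ)) * (29/20) + (29/20) * (1/(m:ℝ) - 1/((m:ℝ)+1)) := by ring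
          rw [hsum]
          linarith
      intro m hm
      rcases le_or_gt 6 m with h6 | h6
      · exact key6 m h6
      · have hcase : m = 2 ∨ m = 3 ∨ m = 4 ∨ m = 5 := by omega
        rcases hcase with rfl | rfl | rfl | rfl
        · simp [Finset.sum_range_succ]; nlinarith
        · simp [Finset.sum_range_succ]; nlinarith
        · simp [Finset.sum_range_succ]; nlinarith
        · simp [Finset.sum_range_succ]; nlinarith
    have hSpos : (0:ℝ) < (∑ i ∈ Finset.range n, (1 : ℝ) / (i + 1)) - 1 := by
      have h2 : (∑ i ∈ Finset.range 2, (1 : ℝ) / (i + 1))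
          ≤ ∑ i ∈ Finset.range n, (1 : ℝ) / (i + 1) := by
        apply Finset.sum_le_sum_of_subset_of_nonneg
        · exact Finset.range_subset_range.mpr hn
        · intro i _ _; positivity
      rw [show (∑ i ∈ Finset.range 2, (1:ℝ)/(i+1)) = 3/2 from by
        simp [Finset.sum_range_succ]; norm_num] at h2
      linarith
    rw [hS6]
    rw [div_le_div_iff₀ hSpos (by norm_num : (0:ℝ) < 49/20 - 1)]
    have := key n hn
    nlinarith
  · rw [hS6]; ring
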